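/- Let Γ be a convex lattice polygon whose adjoint Γ' is nonempty, and suppose every optimal direction of Γ' is tight for Γ', i.e. S(Γ') = T(Γ') where T(Γ') = {h ∈ S(Γ') : h tight for Γ'} (this requires Γ'' nonempty). Then S(Γ) = S(Γ') and v(Γ) = v(Γ') + 2. -/

import Mathlib

noncomputable section

/-- `p` is a lattice point of `ℤ² ⊂ ℝ²`. -/
def IsLat (p : ℝ × ℝ) : Prop := (∃ m : ℤ, p.1 = m) ∧ (∃ n : ℤ, p.2 = n)

/-- evaluation of the integral linear functional `h` at a point `p`. -/
def ev (h : ℤ × ℤ) (p : ℝ × ℝ) : ℝ := (h.1 : ℝ) * p.1 + (h.2 : ℝ) * p.2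

/-- the maximum of `h` on `Γ`. -/
def maxW (Γ : Set (ℝ × ℝ)) (h : ℤ × ℤ) : ℝ := sSup (ev h '' Γ)

/-- the minimum of `h` on `Γ`. -/
def minW (Γ : Set (ℝ × ℝ)) (h : ℤ × ℤ) : ℝ := sInf (ev h '' Γ)

/-- the width of `Γ` in direction `h`. -/
def width (Γ : Set (ℝ × ℝ)) (h : ℤ × ℤ) : ℝ := maxW Γ h - minW Γ h

/-- the adjoint polygon: convex hull of the interior lattice points of `Γ`. -/
def adjoint (Γ : Set (ℝ × ℝ)) : Set (ℝ × ℝ) :=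
  convexHull ℝ {p | p ∈ interior Γ ∧ IsLat p}

/-- `h` is tight for `Γ` (max-tight and min-tight with respect to the adjoint). -/
def Tight (Γ : Set (ℝ × ℝ)) (h : ℤ × ℤ) : Prop :=
  maxW Γ h = maxW (adjoint Γ) h + 1 ∧ minW Γ h = minW (adjoint Γ) h - 1

/-- the lattice width of `Γ`: minimal width over nonzero integral directions. -/
def latticeWidth (Γ : Set (ℝ × ℝ)) : ℝ := sInf (width Γ '' {h : ℤ × ℤ | h ≠ 0})

/-- a primitive integral direction. -/
def IsPrimitive (h : ℤ × ℤ) : Prop := Int.gcd h.1 h.2 = 1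

/-- the set of optimal (minimal width) nonzero directions of `Γ`. -/
def optimalSet (Γ : Set (ℝ × ℝ)) : Set (ℤ × ℤ) :=
  {h | h ≠ 0 ∧ width Γ h = latticeWidth Γ}

namespace Stmt9


abbrev Pt := ℝ × ℝ

lemma isLinearMap_ev (h : ℤ × ℤ) : IsLinearMap ℝ (ev h) := by
  constructor
  · intro p q; simp [ev]; ring
  · intro c p; simp [ev]; ring

lemma ev_int {h : ℤ × ℤ} {p : Pt} (hp : IsLat p) : ∃ m : ℤ, ev h p = (m : ℝ) := by
  obtain ⟨⟨a, ha⟩, ⟨b, hb⟩⟩ := hp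
  exact ⟨h.1 * a + h.2 * b, by simp [ev, ha, hb]⟩

lemma hull_le {A : Set Pt} {h : ℤ × ℤ} {c : ℝ} (H : ∀ p ∈ A, ev h p ≤ c) :
    convexHull ℝ A ⊆ {x | ev h x ≤ c} :=
  convexHull_min H (convex_halfSpace_le (isLinearMap_ev h) c)

lemma exists_greatest {A : Set Pt} (h : ℤ × ℤ) (hlat : ∀ p ∈ A, IsLat p)
    (hne : A.Nonempty) (hbdd : BddAbove (ev h '' A)) :
    ∃ p ∈ A, ∀ q ∈ A, ev h q ≤ ev h p := by
  obtain ⟨b, hb⟩ := hbdd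
  have Hbd : ∃ bz : ℤ, ∀ z : ℤ, (∃ p ∈ A, ev h p = (z : ℝ)) → z ≤ bz := by
    refine ⟨⌈b⌉, fun z ⟨p, hp, hz⟩ => ?_⟩
    have : (z : ℝ) ≤ b := hz ▸ hb ⟨p, hp, rfl⟩
    exact_mod_cast this.trans (Int.le_ceil b)
  have Hinh : ∃ z : ℤ, ∃ p ∈ A, ev h p = (z : ℝ) := by
    obtain ⟨p, hp⟩ := hne
    obtain ⟨m, hm⟩ := ev_int (hlat p hp)
    exact ⟨m, p, hp, hm⟩
  obtain ⟨lub, ⟨p, hp, hev⟩, hub⟩ := Int.exists_greatest_of_bdd Hbd Hinh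
  refine ⟨p, hp, fun q hq => ?_⟩
  obtain ⟨m, hm⟩ := ev_int (hlat q hq)
  have : m ≤ lub := hub m ⟨q, hq, hm⟩
  rw [hev, hm]; exact_mod_cast this

lemma maxW_hull {A : Set Pt} {h : ℤ × ℤ} {p : Pt} (hp : p ∈ A)
    (hmax : ∀ q ∈ A, ev h q ≤ ev h p) : maxW (convexHull ℝ A) h = ev h p := by
  apply IsGreatest.csSup_eq
  constructor
  · exact ⟨p, subset_convexHull ℝ A hp, rfl⟩
  · rintro x ⟨y, hy, rfl⟩; exact hull_le hmax hy

lemma bddAbove_hull {A : Set Pt} {h : ℤ × ℤ} {c : ℝ} (H : ∀ p ∈ A, ev h p ≤ c) :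
    BddAbove (ev h '' convexHull ℝ A) := by
  refine ⟨c, ?_⟩; rintro x ⟨y, hy, rfl⟩; exact hull_le H hy

lemma ev_le_maxW {Γ : Set Pt} {h : ℤ × ℤ} (hbdd : BddAbove (ev h '' Γ)) {x : Pt}
    (hx : x ∈ Γ) : ev h x ≤ maxW Γ h := le_csSup hbdd ⟨x, hx, rfl⟩

lemma ev_neg (h : ℤ × ℤ) (p : Pt) : ev (-h) p = - ev h p := by
  simp [ev]; ring

lemma minW_neg (Γ : Set Pt) (h : ℤ × ℤ) : minW Γ h = - maxW Γ (-h) := by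
  have : ev (-h) '' Γ = -(ev h '' Γ) := by
    ext x
    simp only [Set.mem_neg, Set.mem_image]
    constructor
    · rintro ⟨y, hy, rfl⟩; exact ⟨y, hy, by rw [ev_neg]; ring⟩
    · rintro ⟨y, hy, hxy⟩; exact ⟨y, hy, by rw [ev_neg, hxy]; ring⟩
  rw [minW, maxW, this, Real.sInf_def]

lemma interior_lt {Γ : Set Pt} {h : ℤ × ℤ} (hh : h ≠ 0) (hbdd : BddAbove (ev h '' Γ))
    {x : Pt} (hx : x ∈ interior Γ) : ev h x < maxW Γ h := by
  obtain ⟨ε, hε, hball⟩ := Metric.mem_nhds_iff.mp (mem_interior_iff_mem_nhds.mp hx)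
  set N : ℝ := |(h.1 : ℝ)| + |(h.2 : ℝ)| + 1 with hN
  have hNpos : 0 < N := by positivity
  set δ : ℝ := ε / (2 * N) with hδ
  have hδpos : 0 < δ := by positivity
  set y : Pt := (x.1 + δ * h.1, x.2 + δ * h.2) with hy
  have hyball : y ∈ Metric.ball x ε := by
    rw [Metric.mem_ball, Prod.dist_eq]
    have h1 : dist y.1 x.1 < ε := by
      rw [Real.dist_eq]
      have : |y.1 - x.1| = δ * |(h.1:ℝ)| := by
        rw [show y.1 - x.1 = δ * h.1 by simp [hy]]
        rw [abs_mul, abs_of_pos hδpos]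
      rw [this]
      calc δ * |(h.1:ℝ)| ≤ δ * N := by
            apply mul_le_mul_of_nonneg_left _ hδpos.le
            rw [hN]; nlinarith [abs_nonneg ((h.2:ℝ))]
        _ = ε / 2 := by rw [hδ]; field_simp
        _ < ε := by linarith
    have h2 : dist y.2 x.2 < ε := by
      rw [Real.dist_eq]
      have : |y.2 - x.2| = δ * |(h.2:ℝ)| := by
        rw [show y.2 - x.2 = δ * h.2 by simp [hy]]
        rw [abs_mul, abs_of_pos hδpos]
      rw [this]
      calc δ * |(h.2:ℝ)| ≤ δ * N := by
            apply mul_le_mul_of_nonneg_left _ hδpos.le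
            rw [hN]; nlinarith [abs_nonneg ((h.1:ℝ))]
        _ = ε / 2 := by rw [hδ]; field_simp
        _ < ε := by linarith
    exact max_lt h1 h2
  have hyΓ : y ∈ Γ := hball hyball
  have hsq : 0 < (h.1:ℝ)^2 + (h.2:ℝ)^2 := by
    rcases (show h.1 ≠ 0 ∨ h.2 ≠ 0 by
      by_contra hc; push_neg at hc; exact hh (Prod.ext hc.1 hc.2)) with h1 | h2
    · have : (h.1:ℝ) ≠ 0 := Int.cast_ne_zero.mpr h1
      have := mul_self_pos.mpr this
      nlinarith [sq_nonneg (h.2:ℝ)]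
    · have : (h.2:ℝ) ≠ 0 := Int.cast_ne_zero.mpr h2
      have := mul_self_pos.mpr this
      nlinarith [sq_nonneg (h.1:ℝ)]
  have hev : ev h y = ev h x + δ * ((h.1:ℝ)^2 + (h.2:ℝ)^2) := by
    simp [ev, hy]; ring
  have : ev h x < ev h y := by rw [hev]; nlinarith
  exact this.trans_le (ev_le_maxW hbdd hyΓ)

lemma int_gap {a b : ℝ} (ha : ∃ m : ℤ, a = m) (hb : ∃ m : ℤ, b = m) (h : a < b) :
    a + 1 ≤ b := by
  obtain ⟨m, rfl⟩ := ha; obtain ⟨k, rfl⟩ := hb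
  exact_mod_cast (by exact_mod_cast h : m < k)


lemma ev_combo (g : ℤ × ℤ) (p q : Pt) (t : ℝ) :
    ev g ((1 - t) • p + t • q) = (1 - t) * ev g p + t * ev g q := by
  simp [ev, Prod.smul_fst, Prod.smul_snd, Prod.fst_add, Prod.snd_add, smul_eq_mul]
  ring

lemma lat_of_coords {ξ h : ℤ × ℤ} (hdet : ξ.1 * h.2 - ξ.2 * h.1 = 1) {z : Pt}
    (h1 : ∃ k : ℤ, ev ξ z = k) (h2 : ∃ k : ℤ, ev h z = k) : IsLat z := by
  obtain ⟨α, e1⟩ := h1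
  obtain ⟨β, e2⟩ := h2
  have hdetR : (ξ.1 : ℝ) * h.2 - ξ.2 * h.1 = 1 := by exact_mod_cast congrArg (Int.cast : ℤ → ℝ) hdet
  simp only [ev] at e1 e2
  constructor
  · refine ⟨α * h.2 - β * ξ.2, ?_⟩
    push_cast
    linear_combination (h.2 : ℝ) * e1 - (ξ.2 : ℝ) * e2 - z.1 * hdetR
  · refine ⟨β * ξ.1 - α * h.1, ?_⟩
    push_cast
    linear_combination (ξ.1 : ℝ) * e2 - (h.1 : ℝ) * e1 - z.2 * hdetR


lemma arith1 {Dz n s c xz : ℤ} (hD : 0 < Dz) (hc : 0 ≤ c) (hr0 : 0 ≤ n - s)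
    (hL : n * (Dz + c + 1) < Dz * xz + (c + 1) * s) : n + 1 ≤ xz := by
  by_contra hcc
  push_neg at hcc
  have hxn : xz ≤ n := by omega
  have e1 : Dz * xz ≤ Dz * n := mul_le_mul_of_nonneg_left hxn hD.le
  have hsn : s ≤ n := by omega
  have e2 : (c + 1) * s ≤ (c + 1) * n := mul_le_mul_of_nonneg_left hsn (by omega)
  have id1 : n * (Dz + c + 1) = Dz * n + (c + 1) * n := by ring
  rw [id1] at hL
  linarith

lemma arith2 {Dz n s c xz : ℤ} (hD : 0 < Dz) (hc : 0 ≤ c) (hrD : n - s < Dz)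
    (hL : Dz * xz + (c + 1) * s < (n + 1) * (Dz + c + 1)) : xz ≤ n + c + 1 := by
  by_contra hcc
  push_neg at hcc
  have hxn : n + c + 2 ≤ xz := by omega
  have e1 : Dz * (n + c + 2) ≤ Dz * xz := mul_le_mul_of_nonneg_left hxn hD.le
  have e3 : n - s + 1 ≤ Dz := by omega
  have e4 : (c + 1) * (n - s + 1) ≤ (c + 1) * Dz := mul_le_mul_of_nonneg_left e3 (by omega)
  have id1 : (n + 1) * (Dz + c + 1) = Dz * n + Dz + (c + 1) * n + (c + 1) := by ring
  have id2 : Dz * (n + c + 2) = Dz * n + Dz * c + 2 * Dz := by ring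
  have id3 : (c + 1) * (n - s + 1) = (c + 1) * n - (c + 1) * s + (c + 1) := by ring
  have id4 : (c + 1) * Dz = Dz * c + Dz := by ring
  rw [id1] at hL
  rw [id2] at e1
  rw [id3, id4] at e4
  linarith

lemma tight_max
    (S : Set Pt) (hfin : S.Finite) (hne : S.Nonempty) (hlat : ∀ p ∈ S, IsLat p)
    (Γ : Set Pt) (hΓ : Γ = convexHull ℝ S)
    (hP : ({p | p ∈ interior Γ ∧ IsLat p}).Nonempty)
    (hQ : ({p | p ∈ interior (adjoint Γ) ∧ IsLat p}).Nonempty)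
    (h : ℤ × ℤ) (hh : h ≠ 0)
    (ht : maxW (adjoint Γ) h = maxW (adjoint (adjoint Γ)) h + 1) :
    maxW Γ h ≤ maxW (adjoint Γ) h + 1 := by
  -- basic sets
  set P : Set Pt := {p | p ∈ interior Γ ∧ IsLat p} with hPdef
  have hΓ' : adjoint Γ = convexHull ℝ P := rfl
  set Q : Set Pt := {p | p ∈ interior (adjoint Γ) ∧ IsLat p} with hQdef
  have hΓ'' : adjoint (adjoint Γ) = convexHull ℝ Q := rfl
  have convexΓ : Convex ℝ Γ := hΓ ▸ convex_convexHull ℝ S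
  have convexΓ' : Convex ℝ (adjoint Γ) := convex_convexHull ℝ _
  have Plat : ∀ p ∈ P, IsLat p := fun p hp => hp.2
  have Qlat : ∀ p ∈ Q, IsLat p := fun p hp => hp.2
  have PsubIntΓ : P ⊆ interior Γ := fun p hp => hp.1
  have PsubΓ : P ⊆ Γ := fun p hp => interior_subset hp.1
  have Γ'subIntΓ : adjoint Γ ⊆ interior Γ := by
    rw [hΓ']; exact convexHull_min PsubIntΓ convexΓ.interior
  have Γ'subΓ : adjoint Γ ⊆ Γ := Γ'subIntΓ.trans interior_subset
  have QsubP : Q ⊆ P := fun p hp => ⟨Γ'subIntΓ (interior_subset hp.1), hp.2⟩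
  -- boundedness
  have bddS : ∀ g : ℤ × ℤ, BddAbove (ev g '' S) := fun g => (hfin.image _).bddAbove
  have bddΓ : ∀ g : ℤ × ℤ, BddAbove (ev g '' Γ) := by
    intro g
    obtain ⟨c, hc⟩ := bddS g
    rw [hΓ]
    exact bddAbove_hull (fun p hp => hc ⟨p, hp, rfl⟩)
  have bddP : ∀ g : ℤ × ℤ, BddAbove (ev g '' P) := fun g =>
    (bddΓ g).mono (Set.image_mono PsubΓ)
  have bddΓ' : ∀ g : ℤ × ℤ, BddAbove (ev g '' adjoint Γ) := fun g =>
    (bddΓ g).mono (Set.image_mono Γ'subΓ)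
  have bddQ : ∀ g : ℤ × ℤ, BddAbove (ev g '' Q) := fun g =>
    (bddP g).mono (Set.image_mono QsubP)
  -- maxW over the adjoint, for arbitrary directions, is attained at a point of P
  have maxΓ' : ∀ g : ℤ × ℤ, ∃ p ∈ P, maxW (adjoint Γ) g = ev g p ∧
      ∀ q ∈ P, ev g q ≤ ev g p := by
    intro g
    obtain ⟨p, hp, hmax⟩ := exists_greatest g Plat hP (bddP g)
    exact ⟨p, hp, hΓ' ▸ maxW_hull hp hmax, hmax⟩
  have maxΓ'' : ∀ g : ℤ × ℤ, ∃ p ∈ Q, maxW (adjoint (adjoint Γ)) g = ev g p ∧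
      ∀ q ∈ Q, ev g q ≤ ev g p := by
    intro g
    obtain ⟨p, hp, hmax⟩ := exists_greatest g Qlat hQ (bddQ g)
    exact ⟨p, hp, hΓ'' ▸ maxW_hull hp hmax, hmax⟩
  -- the strict gap between Γ'' and Γ' in any nonzero direction
  have gap : ∀ g : ℤ × ℤ, g ≠ 0 → maxW (adjoint (adjoint Γ)) g + 1 ≤ maxW (adjoint Γ) g := by
    intro g hg
    obtain ⟨p2, hp2, hm2, _⟩ := maxΓ'' g
    obtain ⟨p1, hp1, hm1, _⟩ := maxΓ' g
    have hlt : ev g p2 < maxW (adjoint Γ) g := interior_lt hg (bddΓ' g) hp2.1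
    rw [hm2, hm1]
    rw [hm1] at hlt
    exact int_gap (ev_int (Plat _ (QsubP hp2))) (ev_int (Plat _ hp1)) hlt
  -- h is primitive
  have hprim : Int.gcd h.1 h.2 = 1 := by
    set d : ℤ := (Int.gcd h.1 h.2 : ℤ) with hd
    have hdne : d ≠ 0 := by
      simp only [hd, ne_eq, Int.natCast_eq_zero]
      rw [Int.gcd_eq_zero_iff]
      intro ⟨a, b⟩; exact hh (Prod.ext a b)
    have hdpos : 0 < d := lt_of_le_of_ne (Int.natCast_nonneg _) (Ne.symm hdne)
    set h0 : ℤ × ℤ := (h.1 / d, h.2 / d) with hh0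
    have hfac1 : h.1 = d * h0.1 := (Int.mul_ediv_cancel' (Int.gcd_dvd_left h.1 h.2)).symm
    have hfac2 : h.2 = d * h0.2 := (Int.mul_ediv_cancel' (Int.gcd_dvd_right h.1 h.2)).symm
    have h0ne : h0 ≠ 0 := by
      intro h0e
      apply hh
      have e1 : h0.1 = 0 := by rw [h0e]; rfl
      have e2 : h0.2 = 0 := by rw [h0e]; rfl
      rw [e1] at hfac1
      rw [e2] at hfac2
      have : h.1 = 0 := by omega
      have h2 : h.2 = 0 := by omega
      exact Prod.ext this h2
    have hevfac : ∀ p : Pt, ev h p = (d : ℝ) * ev h0 p := by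
      intro p; rw [ev, ev, hfac1, hfac2]; push_cast; ring
    -- scaling of maxW
    obtain ⟨p1, hp1, hm1, hmax1⟩ := maxΓ' h
    obtain ⟨p10, hp10, hm10, hmax10⟩ := maxΓ' h0
    have scale1 : maxW (adjoint Γ) h = (d : ℝ) * maxW (adjoint Γ) h0 := by
      rw [hm1, hm10]
      have l1 : ev h p1 ≤ (d:ℝ) * ev h0 p10 := by
        rw [hevfac p1]
        have := hmax10 p1 hp1
        have hdR : (0:ℝ) < d := by exact_mod_cast hdpos
        nlinarith
      have l2 : (d:ℝ) * ev h0 p10 ≤ ev h p1 := by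
        have := hmax1 p10 hp10
        rw [hevfac p10] at this
        linarith
      linarith
    obtain ⟨p2, hp2, hm2, hmax2⟩ := maxΓ'' h
    obtain ⟨p20, hp20, hm20, hmax20⟩ := maxΓ'' h0
    have scale2 : maxW (adjoint (adjoint Γ)) h = (d : ℝ) * maxW (adjoint (adjoint Γ)) h0 := by
      rw [hm2, hm20]
      have l1 : ev h p2 ≤ (d:ℝ) * ev h0 p20 := by
        rw [hevfac p2]
        have := hmax20 p2 hp2
        have hdR : (0:ℝ) < d := by exact_mod_cast hdpos
        nlinarith
      have l2 : (d:ℝ) * ev h0 p20 ≤ ev h p2 := by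
        have := hmax2 p20 hp20
        rw [hevfac p20] at this
        linarith
      linarith
    have hgap0 := gap h0 h0ne
    have hdR : (1:ℝ) ≤ d := by exact_mod_cast hdpos
    have : (d:ℝ) = 1 := by
      rw [scale1, scale2] at ht
      nlinarith
    have hd1 : d = 1 := by exact_mod_cast this
    rw [hd] at hd1
    exact_mod_cast hd1
  -- Bezout coefficients
  have hbez : h.1 * Int.gcdA h.1 h.2 + h.2 * Int.gcdB h.1 h.2 = 1 := by
    have hg := Int.gcd_eq_gcd_ab h.1 h.2
    rw [hprim] at hg
    push_cast at hg
    linarith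
  set ξ₀ : ℤ × ℤ := (Int.gcdB h.1 h.2, - Int.gcdA h.1 h.2) with hξ₀
  have det₀ : ξ₀.1 * h.2 - ξ₀.2 * h.1 = 1 := by
    simp only [hξ₀]
    ring_nf
    linarith [hbez]
  by_contra hcon
  push_neg at hcon
  -- attainment points
  obtain ⟨q, hqS, hqmax⟩ := exists_greatest h hlat hne (bddS h)
  have hq : maxW Γ h = ev h q := hΓ ▸ maxW_hull hqS hqmax
  have hqΓ : q ∈ Γ := hΓ ▸ subset_convexHull ℝ S hqS
  have hqlat : IsLat q := hlat q hqS
  obtain ⟨p1, hp1, hm1, hmax1⟩ := maxΓ' h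
  obtain ⟨p2, hp2, hm2, hmax2⟩ := maxΓ'' h
  obtain ⟨Mz, hMz⟩ := ev_int (h := h) hqlat
  obtain ⟨mz, hmz⟩ := ev_int (h := h) (Plat p1 hp1)
  have hMm : mz + 2 ≤ Mz := by
    have hR : (mz:ℝ) + 1 < (Mz:ℝ) := by
      rw [← hmz, ← hMz, ← hq]
      rw [hm1] at hcon
      linarith
    have : ((mz + 1 : ℤ):ℝ) < ((Mz:ℤ):ℝ) := by push_cast; linarith
    have : (mz + 1 : ℤ) < Mz := by exact_mod_cast this
    omega
  have PsubΓ' : P ⊆ adjoint Γ := by rw [hΓ']; exact subset_convexHull ℝ P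
  have QsubΓ'' : Q ⊆ adjoint (adjoint Γ) := by rw [hΓ'']; exact subset_convexHull ℝ Q
  have hp2v : ev h p2 = (mz:ℝ) - 1 := by
    rw [hm1, hm2, hmz] at ht
    linarith
  -- the level of a point of P
  have levleP : ∀ p ∈ P, ev h p ≤ (mz:ℝ) := by
    intro p hp
    rw [← hmz, ← hm1]
    exact ev_le_maxW (bddΓ' h) (PsubΓ' hp)
  -- the crossing machinery
  set t : Pt → ℝ := fun p => ((mz:ℝ) + 1 - ev h p)/((Mz:ℝ) - ev h p) with htdef
  set w : Pt → Pt := fun p => (1 - t p) • p + (t p) • q with hwdef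
  have hMR : (mz:ℝ) + 2 ≤ (Mz:ℝ) := by exact_mod_cast hMm
  have wfacts : ∀ p ∈ P, w p ∈ interior Γ ∧ ev h (w p) = (mz:ℝ) + 1 := by
    intro p hp
    have hyle := levleP p hp
    have hden : 0 < (Mz:ℝ) - ev h p := by linarith
    have htv : t p = ((mz:ℝ) + 1 - ev h p)/((Mz:ℝ) - ev h p) := rfl
    have htpos : 0 < t p := by rw [htv]; exact div_pos (by linarith) hden
    have htlt : t p < 1 := by rw [htv]; rw [div_lt_one hden]; linarith
    have hwp : w p = (1 - t p) • p + (t p) • q := rfl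
    constructor
    · rw [hwp]
      exact convexΓ.combo_interior_closure_mem_interior hp.1 (subset_closure hqΓ)
        (by linarith) htpos.le (by ring)
    · rw [hwp, ev_combo, hMz, htv]
      field_simp
      ring
  -- no "integer" points strictly above level mz
  have noInt : ∀ z : Pt, z ∈ interior Γ → ev h z = (mz:ℝ) + 1 →
      ∀ ζ : ℤ × ℤ, ζ.1 * h.2 - ζ.2 * h.1 = 1 → ∀ k : ℤ, ev ζ z ≠ (k:ℝ) := by
    intro z hz hlev ζ hζ k hk
    have hzlat : IsLat z := lat_of_coords hζ ⟨k, hk⟩ ⟨mz + 1, by push_cast; linarith⟩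
    have hzP : z ∈ P := ⟨hz, hzlat⟩
    have := levleP z hzP
    linarith
  -- the integer-free slice at level mz + 1
  obtain ⟨w1mem, w1lev⟩ := wfacts p1 hp1
  set a : ℝ := ev ξ₀ (w p1) with hadef
  set n₀ : ℤ := ⌊a⌋ with hn₀def
  have ha1 : (n₀:ℝ) < a := by
    refine (Int.floor_le a).lt_of_ne ?_
    intro e
    exact noInt _ w1mem w1lev ξ₀ det₀ n₀ e.symm
  have ha2 : a < (n₀:ℝ) + 1 := by
    have := Int.lt_floor_add_one a
    push_cast at this ⊢
    linarith
  have hn₀ : ∀ p ∈ P, (n₀:ℝ) < ev ξ₀ (w p) ∧ ev ξ₀ (w p) < (n₀:ℝ) + 1 := by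
    intro p hp
    obtain ⟨wpmem, wplev⟩ := wfacts p hp
    set b : ℝ := ev ξ₀ (w p) with hbdef
    constructor
    · by_contra hble
      push_neg at hble
      have hab : 0 < a - b := by linarith
      set θ : ℝ := (a - (n₀:ℝ))/(a - b) with hθdef
      have hθ0 : 0 < θ := div_pos (by linarith) hab
      have hθ1 : θ ≤ 1 := by rw [hθdef, div_le_one hab]; linarith
      set z : Pt := (1 - θ) • (w p1) + θ • (w p) with hzdef
      have hz : z ∈ interior Γ := convexΓ.interior w1mem wpmem (by linarith) hθ0.le (by ring)
      have hlevz : ev h z = (mz:ℝ) + 1 := by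
        rw [hzdef, ev_combo, w1lev, wplev]; ring
      have hxz : ev ξ₀ z = (n₀:ℝ) := by
        rw [hzdef, ev_combo, ← hadef, ← hbdef, hθdef]
        field_simp
        ring
      exact noInt z hz hlevz ξ₀ det₀ n₀ hxz
    · by_contra hbge
      push_neg at hbge
      have hab : 0 < b - a := by linarith
      set θ : ℝ := ((n₀:ℝ) + 1 - a)/(b - a) with hθdef
      have hθ0 : 0 < θ := div_pos (by linarith) hab
      have hθ1 : θ ≤ 1 := by rw [hθdef, div_le_one hab]; linarith
      set z : Pt := (1 - θ) • (w p1) + θ • (w p) with hzdef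
      have hz : z ∈ interior Γ := convexΓ.interior w1mem wpmem (by linarith) hθ0.le (by ring)
      have hlevz : ev h z = (mz:ℝ) + 1 := by
        rw [hzdef, ev_combo, w1lev, wplev]; ring
      have hxz : ev ξ₀ z = (n₀:ℝ) + 1 := by
        rw [hzdef, ev_combo, ← hadef, ← hbdef, hθdef]
        field_simp
        ring
      exact noInt z hz hlevz ξ₀ det₀ (n₀ + 1) (by push_cast at hxz ⊢; linarith)
  -- shear the auxiliary functional so that 0 ≤ r < Dz
  obtain ⟨sz0, hsz0⟩ := ev_int (h := ξ₀) hqlat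
  set Dz : ℤ := Mz - mz - 1 with hDzdef
  have hDpos : 0 < Dz := by omega
  set k : ℤ := (n₀ - sz0) / Dz with hkdef
  set ξ : ℤ × ℤ := (ξ₀.1 + k * h.1, ξ₀.2 + k * h.2) with hξdef
  have detξ : ξ.1 * h.2 - ξ.2 * h.1 = 1 := by
    have : ξ.1 = ξ₀.1 + k * h.1 := rfl
    have h2 : ξ.2 = ξ₀.2 + k * h.2 := rfl
    rw [this, h2]
    linear_combination det₀
  have evξ : ∀ p : Pt, ev ξ p = ev ξ₀ p + (k:ℝ) * ev h p := by
    intro p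
    have e1 : ξ.1 = ξ₀.1 + k * h.1 := rfl
    have e2 : ξ.2 = ξ₀.2 + k * h.2 := rfl
    rw [ev, ev, ev, e1, e2]
    push_cast
    ring
  set n : ℤ := n₀ + k * (mz + 1) with hndef
  set s : ℤ := sz0 + k * Mz with hsdef
  have hsq : ev ξ q = (s:ℝ) := by rw [evξ, hsz0, hMz, hsdef]; push_cast; ring
  set r : ℤ := n - s with hrdef
  have hrval : r = n₀ - sz0 - Dz * k := by rw [hrdef, hndef, hsdef, hDzdef]; ring
  have hremod : n₀ - sz0 - Dz * k = (n₀ - sz0) % Dz := by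
    rw [hkdef, Int.emod_def]
  have hr0 : 0 ≤ r := by
    rw [hrval, hremod]; exact Int.emod_nonneg _ (by omega)
  have hrD : r < Dz := by
    rw [hrval, hremod]; exact Int.emod_lt_of_pos _ hDpos
  have hnξ : ∀ p ∈ P, ((n:ℝ)) < ev ξ (w p) ∧ ev ξ (w p) < (n:ℝ) + 1 := by
    intro p hp
    obtain ⟨wpmem, wplev⟩ := wfacts p hp
    obtain ⟨l1, l2⟩ := hn₀ p hp
    rw [evξ (w p), wplev, hndef]
    constructor
    · push_cast; linarith
    · push_cast; linarith
  -- the key integral inequalities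
  have key : ∀ p ∈ P, ∀ xz yz : ℤ, ev ξ p = (xz:ℝ) → ev h p = (yz:ℝ) →
      1 ≤ xz - n ∧ xz - n ≤ mz - yz + 1 := by
    intro p hp xz yz hx hy
    obtain ⟨l1, l2⟩ := hnξ p hp
    have hyle := levleP p hp
    have hylez : yz ≤ mz := by
      rw [hy] at hyle; exact_mod_cast hyle
    have hden : (0:ℝ) < (Mz:ℝ) - yz := by
      have : ((yz:ℤ):ℝ) ≤ ((mz:ℤ):ℝ) := by exact_mod_cast hylez
      linarith
    have hwx : ev ξ (w p) = ((Dz:ℝ) * xz + ((mz:ℝ) + 1 - yz) * s)/((Mz:ℝ) - yz) := by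
      have htv : t p = ((mz:ℝ) + 1 - ev h p)/((Mz:ℝ) - ev h p) := rfl
      have hwp : w p = (1 - t p) • p + (t p) • q := rfl
      have hDcast : (Dz:ℝ) = (Mz:ℝ) - mz - 1 := by rw [hDzdef]; push_cast; ring
      have hne : (Mz:ℝ) - (yz:ℝ) ≠ 0 := ne_of_gt hden
      rw [hwp, ev_combo, hsq, hx, htv, hy, hDcast]
      field_simp
      try ring
      try exact Or.inl trivial
    rw [hwx] at l1 l2
    have L1 : (n:ℝ) * ((Mz:ℝ) - yz) < (Dz:ℝ) * xz + ((mz:ℝ) + 1 - yz) * s :=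
      (lt_div_iff₀ hden).mp l1
    have L2 : (Dz:ℝ) * xz + ((mz:ℝ) + 1 - yz) * s < ((n:ℝ) + 1) * ((Mz:ℝ) - yz) :=
      (div_lt_iff₀ hden).mp l2
    have L1z : n * (Mz - yz) < Dz * xz + (mz + 1 - yz) * s := by exact_mod_cast L1
    have L2z : Dz * xz + (mz + 1 - yz) * s < (n + 1) * (Mz - yz) := by exact_mod_cast L2
    set c : ℤ := mz - yz with hcdef
    have hc0 : 0 ≤ c := by omega
    have hMzy : Mz - yz = Dz + c + 1 := by omega
    have hmzy : mz + 1 - yz = c + 1 := by omega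
    rw [hMzy, hmzy] at L1z L2z
    constructor
    · have := arith1 hDpos hc0 (by omega) L1z
      omega
    · have := arith2 hDpos hc0 (by omega) L2z
      omega
  -- apply to the deep interior point p2
  have hp2P : p2 ∈ P := QsubP hp2
  obtain ⟨x0, hx0⟩ := ev_int (h := ξ) (Plat p2 hp2P)
  have hkey2 := key p2 hp2P x0 (mz - 1) hx0 (by rw [hp2v]; push_cast; ring)
  have hcases : x0 - n = 1 ∨ x0 - n = 2 := by omega
  rcases hcases with hco | hco
  · -- p2 minimizes ev ξ over P : contradiction with interiority
    set g : ℤ × ℤ := (-ξ.1, -ξ.2) with hgdef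
    have hgne : g ≠ 0 := by
      intro hg0
      rw [hgdef] at hg0
      have e1 : -ξ.1 = 0 := congrArg Prod.fst hg0
      have e2 : -ξ.2 = 0 := congrArg Prod.snd hg0
      have f1 : ξ.1 = 0 := by omega
      have f2 : ξ.2 = 0 := by omega
      rw [f1, f2] at detξ
      simp at detξ
    have hevg : ∀ p : Pt, ev g p = - ev ξ p := by
      intro p
      have e1 : g.1 = -ξ.1 := rfl
      have e2 : g.2 = -ξ.2 := rfl
      rw [ev, ev, e1, e2]; push_cast; ring
    have hboundg : ∀ p ∈ P, ev g p ≤ ev g p2 := by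
      intro p hp
      obtain ⟨xz, hxz⟩ := ev_int (h := ξ) (Plat p hp)
      obtain ⟨yz, hyz⟩ := ev_int (h := h) (Plat p hp)
      have hk := (key p hp xz yz hxz hyz).1
      rw [hevg, hevg, hxz, hx0]
      have : x0 ≤ xz := by omega
      have : ((x0:ℤ):ℝ) ≤ ((xz:ℤ):ℝ) := by exact_mod_cast this
      linarith
    obtain ⟨pg, hpg, hmg, _⟩ := maxΓ' g
    have hlt : ev g p2 < maxW (adjoint Γ) g := interior_lt hgne (bddΓ' g) hp2.1
    rw [hmg] at hlt
    linarith [hboundg pg hpg]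
  · -- p2 maximizes ev (ξ + h) over P : contradiction with interiority
    set g : ℤ × ℤ := (ξ.1 + h.1, ξ.2 + h.2) with hgdef
    have hgne : g ≠ 0 := by
      intro hg0
      rw [hgdef] at hg0
      have e1 : ξ.1 + h.1 = 0 := congrArg Prod.fst hg0
      have e2 : ξ.2 + h.2 = 0 := congrArg Prod.snd hg0
      have f1 : ξ.1 = -h.1 := by omega
      have f2 : ξ.2 = -h.2 := by omega
      rw [f1, f2] at detξ
      have h01 : (0:ℤ) = 1 := by linear_combination detξ
      exact absurd h01 (by norm_num)
    have hevg : ∀ p : Pt, ev g p = ev ξ p + ev h p := by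
      intro p
      have e1 : g.1 = ξ.1 + h.1 := rfl
      have e2 : g.2 = ξ.2 + h.2 := rfl
      rw [ev, ev, ev, e1, e2]; push_cast; ring
    have hboundg : ∀ p ∈ P, ev g p ≤ ev g p2 := by
      intro p hp
      obtain ⟨xz, hxz⟩ := ev_int (h := ξ) (Plat p hp)
      obtain ⟨yz, hyz⟩ := ev_int (h := h) (Plat p hp)
      have hk := (key p hp xz yz hxz hyz).2
      rw [hevg, hevg, hxz, hx0, hyz, hp2v]
      have : xz + yz ≤ x0 + mz - 1 := by omega
      have hc : ((xz + yz : ℤ):ℝ) ≤ ((x0 + mz - 1 : ℤ):ℝ) := by exact_mod_cast this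
      push_cast at hc
      linarith
    obtain ⟨pg, hpg, hmg, _⟩ := maxΓ' g
    have hlt : ev g p2 < maxW (adjoint Γ) g := interior_lt hgne (bddΓ' g) hp2.1
    rw [hmg] at hlt
    linarith [hboundg pg hpg]


lemma tight_min
    (S : Set Pt) (hfin : S.Finite) (hne : S.Nonempty) (hlat : ∀ p ∈ S, IsLat p)
    (Γ : Set Pt) (hΓ : Γ = convexHull ℝ S)
    (hP : ({p | p ∈ interior Γ ∧ IsLat p}).Nonempty)
    (hQ : ({p | p ∈ interior (adjoint Γ) ∧ IsLat p}).Nonempty)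
    (h : ℤ × ℤ) (hh : h ≠ 0)
    (ht : minW (adjoint Γ) h = minW (adjoint (adjoint Γ)) h - 1) :
    minW (adjoint Γ) h - 1 ≤ minW Γ h := by
  have htm : maxW (adjoint Γ) (-h) = maxW (adjoint (adjoint Γ)) (-h) + 1 := by
    have e1 := minW_neg (adjoint Γ) h
    have e2 := minW_neg (adjoint (adjoint Γ)) h
    linarith
  have hres := tight_max S hfin hne hlat Γ hΓ hP hQ (-h) (neg_ne_zero.mpr hh) htm
  have e1 := minW_neg Γ h
  have e2 := minW_neg (adjoint Γ) h
  linarith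

lemma max_drop
    (S : Set Pt) (hfin : S.Finite) (hne : S.Nonempty) (hlat : ∀ p ∈ S, IsLat p)
    (Γ : Set Pt) (hΓ : Γ = convexHull ℝ S)
    (hP : ({p | p ∈ interior Γ ∧ IsLat p}).Nonempty)
    (h : ℤ × ℤ) (hh : h ≠ 0) :
    maxW (adjoint Γ) h + 1 ≤ maxW Γ h := by
  set P : Set Pt := {p | p ∈ interior Γ ∧ IsLat p} with hPdef
  have hΓ' : adjoint Γ = convexHull ℝ P := rfl
  have Plat : ∀ p ∈ P, IsLat p := fun p hp => hp.2
  have PsubΓ : P ⊆ Γ := fun p hp => interior_subset hp.1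
  have bddS : ∀ g : ℤ × ℤ, BddAbove (ev g '' S) := fun g => (hfin.image _).bddAbove
  have bddΓ : ∀ g : ℤ × ℤ, BddAbove (ev g '' Γ) := by
    intro g; obtain ⟨c, hc⟩ := bddS g; rw [hΓ]
    exact bddAbove_hull (fun p hp => hc ⟨p, hp, rfl⟩)
  have bddP : BddAbove (ev h '' P) := (bddΓ h).mono (Set.image_mono PsubΓ)
  obtain ⟨p1, hp1, hmax1⟩ := exists_greatest h Plat hP bddP
  have hm1 : maxW (adjoint Γ) h = ev h p1 := hΓ' ▸ maxW_hull hp1 hmax1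
  obtain ⟨q, hqS, hqmax⟩ := exists_greatest h hlat hne (bddS h)
  have hq : maxW Γ h = ev h q := hΓ ▸ maxW_hull hqS hqmax
  have hlt : ev h p1 < maxW Γ h := interior_lt hh (bddΓ h) hp1.1
  rw [hm1, hq]
  rw [hq] at hlt
  exact int_gap (ev_int (Plat p1 hp1)) (ev_int (hlat q hqS)) hlt

lemma min_drop
    (S : Set Pt) (hfin : S.Finite) (hne : S.Nonempty) (hlat : ∀ p ∈ S, IsLat p)
    (Γ : Set Pt) (hΓ : Γ = convexHull ℝ S)
    (hP : ({p | p ∈ interior Γ ∧ IsLat p}).Nonempty)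
    (h : ℤ × ℤ) (hh : h ≠ 0) :
    minW Γ h ≤ minW (adjoint Γ) h - 1 := by
  have hres := max_drop S hfin hne hlat Γ hΓ hP (-h) (neg_ne_zero.mpr hh)
  have e1 := minW_neg Γ h
  have e2 := minW_neg (adjoint Γ) h
  linarith


end Stmt9

open Stmt9 in
/-- if every optimal direction of the adjoint `Γ'` is tight for `Γ'`
(`S(Γ') = T(Γ')`, requiring `Γ''` nonempty), then `S(Γ) = S(Γ')` and
`v(Γ) = v(Γ') + 2`. -/
theorem stmt_9 (S : Set (ℝ × ℝ)) (hfin : S.Finite) (hne : S.Nonempty)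
    (hlat : ∀ p ∈ S, IsLat p)
    (Γ : Set (ℝ × ℝ)) (hΓ : Γ = convexHull ℝ S)
    (hint1 : {p | p ∈ interior Γ ∧ IsLat p}.Nonempty)
    (hint2 : {p | p ∈ interior (adjoint Γ) ∧ IsLat p}.Nonempty)
    (hST : ∀ h ∈ optimalSet (adjoint Γ), Tight (adjoint Γ) h) :
    optimalSet Γ = optimalSet (adjoint Γ) ∧
    latticeWidth Γ = latticeWidth (adjoint Γ) + 2 := by
  set P : Set Pt := {p | p ∈ interior Γ ∧ IsLat p} with hPdef
  have hΓ' : adjoint Γ = convexHull ℝ P := rfl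
  have Plat : ∀ p ∈ P, IsLat p := fun p hp => hp.2
  have PsubΓ : P ⊆ Γ := fun p hp => interior_subset hp.1
  have bddS : ∀ g : ℤ × ℤ, BddAbove (ev g '' S) := fun g => (hfin.image _).bddAbove
  have bddΓ : ∀ g : ℤ × ℤ, BddAbove (ev g '' Γ) := by
    intro g; obtain ⟨c, hc⟩ := bddS g; rw [hΓ]
    exact bddAbove_hull (fun p hp => hc ⟨p, hp, rfl⟩)
  have bddP : ∀ g : ℤ × ℤ, BddAbove (ev g '' P) := fun g =>
    (bddΓ g).mono (Set.image_mono PsubΓ)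
  have maxΓ' : ∀ g : ℤ × ℤ, ∃ p ∈ P, maxW (adjoint Γ) g = ev g p ∧
      ∀ q ∈ P, ev g q ≤ ev g p := by
    intro g
    obtain ⟨p, hp, hmax⟩ := exists_greatest g Plat hint1 (bddP g)
    exact ⟨p, hp, hΓ' ▸ maxW_hull hp hmax, hmax⟩
  have minΓ' : ∀ g : ℤ × ℤ, ∃ p ∈ P, minW (adjoint Γ) g = ev g p ∧
      ∀ q ∈ P, ev g p ≤ ev g q := by
    intro g
    obtain ⟨p, hp, hm, hmax⟩ := maxΓ' (-g)
    refine ⟨p, hp, ?_, ?_⟩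
    · rw [minW_neg, hm, ev_neg]; ring
    · intro q hq
      have := hmax q hq
      rw [ev_neg, ev_neg] at this
      linarith
  have widthint : ∀ g : ℤ × ℤ, ∃ wz : ℤ, width (adjoint Γ) g = (wz:ℝ) ∧ 0 ≤ wz := by
    intro g
    obtain ⟨pa, hpa, hma, hmaxa⟩ := maxΓ' g
    obtain ⟨pb, hpb, hmb, hminb⟩ := minΓ' g
    obtain ⟨m1, hm1⟩ := ev_int (Plat pa hpa)
    obtain ⟨m2, hm2⟩ := ev_int (Plat pb hpb)
    have hle : (m2:ℝ) ≤ (m1:ℝ) := by rw [← hm1, ← hm2]; exact hmaxa pb hpb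
    refine ⟨m1 - m2, ?_, ?_⟩
    · rw [width, hma, hmb, hm1, hm2]; push_cast; ring
    · have : m2 ≤ m1 := by exact_mod_cast hle
      omega
  have dropw : ∀ g : ℤ × ℤ, g ≠ 0 → width (adjoint Γ) g + 2 ≤ width Γ g := by
    intro g hg
    have h1 := max_drop S hfin hne hlat Γ hΓ hint1 g hg
    have h2 := min_drop S hfin hne hlat Γ hΓ hint1 g hg
    rw [width, width]
    linarith
  have tightw : ∀ g : ℤ × ℤ, g ≠ 0 → Tight (adjoint Γ) g →
      width Γ g = width (adjoint Γ) g + 2 := by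
    intro g hg htg
    have h1 := tight_max S hfin hne hlat Γ hΓ hint1 hint2 g hg htg.1
    have h2 := tight_min S hfin hne hlat Γ hΓ hint1 hint2 g hg htg.2
    have h3 := dropw g hg
    rw [width] at h3 ⊢
    rw [width] at h3 ⊢
    linarith
  have hlw : ∃ h₀ : ℤ × ℤ, h₀ ≠ 0 ∧ width (adjoint Γ) h₀ = latticeWidth (adjoint Γ) ∧
      ∀ g : ℤ × ℤ, g ≠ 0 → width (adjoint Γ) h₀ ≤ width (adjoint Γ) g := by
    have Hbd : ∃ b : ℤ, ∀ z : ℤ, (∃ g : ℤ × ℤ, g ≠ 0 ∧ width (adjoint Γ) g = (z:ℝ)) → b ≤ z := by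
      refine ⟨0, fun z hz => ?_⟩
      obtain ⟨g, hg, hw⟩ := hz
      obtain ⟨wz, hwz, hwpos⟩ := widthint g
      have he : (z:ℝ) = (wz:ℝ) := by rw [← hw, hwz]
      have : z = wz := by exact_mod_cast he
      omega
    have Hinh : ∃ z : ℤ, ∃ g : ℤ × ℤ, g ≠ 0 ∧ width (adjoint Γ) g = (z:ℝ) := by
      obtain ⟨wz, hwz, _⟩ := widthint (1, 0)
      exact ⟨wz, (1, 0), by simp, hwz⟩
    obtain ⟨m₀, ⟨g₀, hg₀, hw₀⟩, hleast⟩ := Int.exists_least_of_bdd Hbd Hinh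
    have hcs : latticeWidth (adjoint Γ) = (m₀:ℝ) := by
      apply IsLeast.csInf_eq
      constructor
      · exact ⟨g₀, hg₀, hw₀⟩
      · rintro v ⟨g, hg, rfl⟩
        obtain ⟨wz, hwz, _⟩ := widthint g
        have : m₀ ≤ wz := hleast wz ⟨g, hg, hwz⟩
        rw [hwz]
        exact_mod_cast this
    refine ⟨g₀, hg₀, by rw [hw₀, hcs], ?_⟩
    intro g hg
    obtain ⟨wz, hwz, _⟩ := widthint g
    have : m₀ ≤ wz := hleast wz ⟨g, hg, hwz⟩
    rw [hw₀, hwz]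
    exact_mod_cast this
  obtain ⟨h₀, hh₀, hw₀, hmin₀⟩ := hlw
  have hbb' : BddBelow (width (adjoint Γ) '' {h : ℤ × ℤ | h ≠ 0}) := by
    refine ⟨0, ?_⟩
    rintro v ⟨g, hg, rfl⟩
    obtain ⟨wz, hwz, hnn⟩ := widthint g
    rw [hwz]
    exact_mod_cast hnn
  have hbbΓ : BddBelow (width Γ '' {h : ℤ × ℤ | h ≠ 0}) := by
    refine ⟨0, ?_⟩
    rintro v ⟨g, hg, rfl⟩
    obtain ⟨wz, hwz, hnn⟩ := widthint g
    have h1 := dropw g hg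
    have h2 : (0:ℝ) ≤ width (adjoint Γ) g := by rw [hwz]; exact_mod_cast hnn
    linarith
  have h₀opt : h₀ ∈ optimalSet (adjoint Γ) := ⟨hh₀, hw₀⟩
  have h₀tight := hST h₀ h₀opt
  have hwΓh₀ : width Γ h₀ = latticeWidth (adjoint Γ) + 2 := by
    rw [tightw h₀ hh₀ h₀tight, hw₀]
  have hlwΓ : latticeWidth Γ = latticeWidth (adjoint Γ) + 2 := by
    apply le_antisymm
    · exact (csInf_le hbbΓ ⟨h₀, hh₀, rfl⟩).trans_eq hwΓh₀
    · apply le_csInf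
      · exact ⟨width Γ h₀, ⟨h₀, hh₀, rfl⟩⟩
      · rintro v ⟨g, hg, rfl⟩
        have h1 := dropw g hg
        have h2 : latticeWidth (adjoint Γ) ≤ width (adjoint Γ) g := csInf_le hbb' ⟨g, hg, rfl⟩
        linarith
  constructor
  · ext g
    simp only [optimalSet, Set.mem_setOf_eq]
    constructor
    · rintro ⟨hg, hwg⟩
      refine ⟨hg, ?_⟩
      have h1 := dropw g hg
      have h2 : latticeWidth (adjoint Γ) ≤ width (adjoint Γ) g := csInf_le hbb' ⟨g, hg, rfl⟩
      rw [hlwΓ] at hwg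
      linarith
    · rintro ⟨hg, hwg⟩
      refine ⟨hg, ?_⟩
      rw [tightw g hg (hST g ⟨hg, hwg⟩), hwg, hlwΓ]
  · exact hlwΓ
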